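/- Let O ⊆ P contain A. For any order ideal J ∈ 𝒥ₖ and any i ∈ [1,k], if j is the ⋖-maximal element with (i,j) ∈ M_O(J), then w^{O,J}(i) = r(i,j). -/

import Mathlib

open scoped Classical Pointwise

noncomputable section

/-- Position of `j` in the total order `1 ⋖ … ⋖ n ⋖ -n ⋖ … ⋖ -1` on `N`. -/
def ordKey (n : ℕ) (j : ℤ) : ℤ := if 0 < j then j else 2 * n + 1 + j

/-- Membership in the type C Gelfand–Tsetlin poset `P`:
pairs `(i,j)` with `1 ≤ i ≤ n` and `i ≤ |j| ≤ n`. -/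
def inP (n : ℕ) (p : ℤ × ℤ) : Prop :=
  1 ≤ p.1 ∧ p.1 ≤ (n : ℤ) ∧ p.1 ≤ |p.2| ∧ |p.2| ≤ (n : ℤ)

/-- The order relation `⪯` of `P`: `(i₁,j₁) ⪯ (i₂,j₂)` iff `i₁ ≤ i₂` and `j₁ ⩽̇ j₂`. -/
def ple (n : ℕ) (p q : ℤ × ℤ) : Prop :=
  p.1 ≤ q.1 ∧ ordKey n p.2 ≤ ordKey n q.2

/-- Strict version of `⪯`. -/
def plt (n : ℕ) (p q : ℤ × ℤ) : Prop := ple n p q ∧ p ≠ q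

/-- The elements of `N = {1,…,n,-n,…,-1}` listed in increasing `⋖` order. -/
def jList (n : ℕ) : List ℤ :=
  ((List.range n).map fun t => (t : ℤ) + 1) ++ ((List.range n).map fun t => (t : ℤ) - n)

/-- All pairs `(i,j)` with `i ∈ [1,n]`, `j ∈ N`, ordered first by `i` increasing,
then by `j` increasing with respect to `⋖`. -/
def posList (n : ℕ) : List (ℤ × ℤ) :=
  (List.range n).flatMap fun a => (jList n).map fun j => ((a : ℤ) + 1, j)

/-- `P` as a finite set. -/
def Pfin (n : ℕ) : Finset (ℤ × ℤ) := (posList n).toFinset.filter (inP n)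

/-- `N` as a finite set. -/
def Nfin (n : ℕ) : Finset ℤ := (jList n).toFinset

/-- The diagonal `A = {(i,i) : 1 ≤ i ≤ n}`. -/
def Aset (n : ℕ) : Finset (ℤ × ℤ) :=
  (Finset.range n).image fun t => (((t : ℤ) + 1, (t : ℤ) + 1) : ℤ × ℤ)

/-- Order ideals (downward closed subsets) of `P`. -/
def IsIdeal (n : ℕ) (J : Finset (ℤ × ℤ)) : Prop :=
  (∀ p ∈ J, inP n p) ∧ ∀ p ∈ J, ∀ q ∈ Pfin n, ple n q p → q ∈ J

/-- The set of `≺`-maximal elements of `J`. -/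
def maxPrec (n : ℕ) (J : Finset (ℤ × ℤ)) : Finset (ℤ × ℤ) :=
  J.filter fun p => ∀ q ∈ J, ple n p q → q = p

/-- `M_O(J) = (J ∩ O) ∪ max_≺(J)`. -/
def MO (n : ℕ) (O J : Finset (ℤ × ℤ)) : Finset (ℤ × ℤ) := (J ∩ O) ∪ maxPrec n J

/-- The permutation `w_M`: the product of the transpositions `s_{i,j}` over `(i,j) ∈ M`,
ordered first by `i` increasing and then by `j` increasing with respect to `⋖`
(the leftmost factor acts last). -/
def wPerm (n : ℕ) (M : Finset (ℤ × ℤ)) : Equiv.Perm ℤ :=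
  (((posList n).filter fun p => decide (p ∈ M)).map fun p => Equiv.swap p.1 p.2).prod

/-- `w^{O,J} = w_O⁻¹ ⬝ w_{M_O(J)}`. -/
def wOJ (n : ℕ) (O J : Finset (ℤ × ℤ)) : Equiv.Perm ℤ :=
  (wPerm n O)⁻¹ * wPerm n (MO n O J)

/-- The principal order ideal `⟨i,j⟩` of `(i,j) ∈ P`. -/
def princ (n : ℕ) (p : ℤ × ℤ) : Finset (ℤ × ℤ) := (Pfin n).filter fun q => ple n q p

/-- `r(i,j) = w^{O,⟨i,j⟩}(i)`. -/
def rMap (n : ℕ) (O : Finset (ℤ × ℤ)) (i j : ℤ) : ℤ := wOJ n O (princ n (i, j)) i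

/-- Inverse of `ordKey` (on the relevant range `[1, 2n]`). -/
def invOrdKey (n : ℕ) (t : ℤ) : ℤ := if t ≤ (n : ℤ) then t else t - (2 * n + 1)

/-- The `⋖`-maximal `j'` with `j' ⋖ j` and `(i,j') ∈ O`. -/
def prevO (n : ℕ) (O : Finset (ℤ × ℤ)) (i j : ℤ) : ℤ :=
  invOrdKey n (((((Nfin n).filter fun j' => (i, j') ∈ O ∧ ordKey n j' < ordKey n j).image
    (ordKey n)).max).unbotD 0)

/-- The pipe-dream linear transform `ξ` of `ℝ^P` (coordinates outside `P` are untouched):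
`ξ(ε_{i,i}) = ε_{i,r(i,i)}` and `ξ(ε_{i,j}) = ε_{i,r(i,j)} - ε_{i,r(i,j')}` for `j ≠ i`,
where `j'` is `⋖`-maximal with `j' ⋖ j` and `(i,j') ∈ O`. -/
def xiMap (n : ℕ) (O : Finset (ℤ × ℤ)) (x : (ℤ × ℤ) → ℝ) : (ℤ × ℤ) → ℝ := fun q =>
  if inP n q then
    (∑ j ∈ (Nfin n).filter (fun j => inP n (q.1, j) ∧ rMap n O q.1 j = q.2), x (q.1, j))
    - (∑ j ∈ (Nfin n).filter
        (fun j => inP n (q.1, j) ∧ j ≠ q.1 ∧ rMap n O q.1 (prevO n O q.1 j) = q.2), x (q.1, j))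
  else x q

/-- Indicator vector `1_{M_O(J)} ∈ ℝ^P`. -/
def indicMO (n : ℕ) (O J : Finset (ℤ × ℤ)) : (ℤ × ℤ) → ℝ := fun p =>
  if p ∈ MO n O J then 1 else 0

/-- The fundamental marked chain-order polytope `𝒬_O(ω_k)`:
the convex hull of the vectors `1_{M_O(J)}`, `J ∈ 𝒥ₖ`. -/
def QOfund (n : ℕ) (O : Finset (ℤ × ℤ)) (k : ℕ) : Set ((ℤ × ℤ) → ℝ) :=
  convexHull ℝ {x | ∃ J : Finset (ℤ × ℤ),
    IsIdeal n J ∧ (J ∩ Aset n).card = k ∧ x = indicMO n O J}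

/-- The marked chain-order polytope `𝒬_O(λ)` for `λ = a₁ω₁ + … + a_nω_n`:
the Minkowski sum `a₁𝒬_O(ω₁) + … + a_n𝒬_O(ω_n)`. -/
def QO (n : ℕ) (O : Finset (ℤ × ℤ)) (a : ℕ → ℕ) : Set ((ℤ × ℤ) → ℝ) :=
  ∑ k ∈ Finset.Icc 1 n, a k • QOfund n O k

/-- Integrality (lattice point) predicate. -/
def IsLat (x : (ℤ × ℤ) → ℝ) : Prop := ∀ p, ∃ m : ℤ, x p = m

/-- Type B: `λ(i) = a_i + … + a_{n-1} + a_n/2`. -/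
def lamB (n : ℕ) (a : ℕ → ℕ) (i : ℤ) : ℝ :=
  (∑ t ∈ Finset.Icc i.toNat (n - 1), (a t : ℝ)) + (a n : ℝ) / 2

/-- The type B poset polytope `𝒬^B_O(λ)` (H-description with factor `1/2`
on the coordinates in `B = {(i,-i)}`). -/
def QB (n : ℕ) (O : Finset (ℤ × ℤ)) (lam : ℤ → ℝ) : Set ((ℤ × ℤ) → ℝ) :=
  {x | (∀ i : ℤ, 1 ≤ i → i ≤ (n : ℤ) → x (i, i) = lam i) ∧
    (∀ p, inP n p → 0 ≤ x p) ∧ (∀ p, ¬ inP n p → x p = 0) ∧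
    ∀ (pq rs : ℤ × ℤ) (c : List (ℤ × ℤ)), pq ∈ O → inP n rs →
      (∀ q ∈ c, inP n q ∧ q ∉ O) →
      List.Chain' (plt n) (pq :: (c ++ [rs])) →
      (c.map x).sum ≤ x pq - (if rs.2 = -rs.1 then (1 : ℝ) / 2 else 1) * x rs}

/-- The point `x^{J,D}`. -/
def xJD (n : ℕ) (O J : Finset (ℤ × ℤ)) (D : Finset ℤ) : (ℤ × ℤ) → ℝ := fun p =>
  if p ∈ MO n O J then (if p.2 = -p.1 ∧ p.1 ∉ D then 2 else 1) else 0

/-- The projection `π : ℝ^P → ℝ^{P∖A}` (realized by zeroing the `A`-coordinates). -/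
def piA (x : (ℤ × ℤ) → ℝ) : (ℤ × ℤ) → ℝ := fun p => if p.2 = p.1 then 0 else x p

/-- The transformed type B poset polytope `Π^B_O(λ) = πξ(𝒬^B_O(λ))`. -/
def PiB (n : ℕ) (O : Finset (ℤ × ℤ)) (a : ℕ → ℕ) : Set ((ℤ × ℤ) → ℝ) :=
  (fun x => piA (xiMap n O x)) '' QB n O (lamB n a)

/-- The point `y^D ∈ ℝ^{P∖A}`. -/
def yD (D : Finset ℤ) : (ℤ × ℤ) → ℝ := fun p => if p.2 = -p.1 ∧ p.1 ∈ D then 1 else 0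

/-! ### Auxiliary machinery for `stmt2` -/

section Stmt2Aux

lemma jList_eq (n : ℕ) : jList n =
    ((List.range n).map fun t : ℕ => ((t : ℤ) + 1)) ++
      ((List.range n).map fun t : ℕ => ((t : ℤ) - n)) := by
  simp only [jList, List.pure_def, List.bind_eq_flatMap, List.map_flatMap,
    ← List.map_eq_flatMap, List.map_map]
  rfl

lemma mem_jList {n : ℕ} {b : ℤ} :
    b ∈ jList n ↔ (1 ≤ b ∧ b ≤ n) ∨ (-(n : ℤ) ≤ b ∧ b ≤ -1) := by
  simp only [jList_eq, List.mem_append, List.mem_map, List.mem_range]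
  constructor
  · rintro (⟨t, ht, rfl⟩ | ⟨t, ht, rfl⟩) <;> omega
  · rintro (⟨h1, h2⟩ | ⟨h1, h2⟩)
    · left; exact ⟨(b - 1).toNat, by omega, by omega⟩
    · right; exact ⟨(b + n).toNat, by omega, by omega⟩

lemma jList_nodup (n : ℕ) : (jList n).Nodup := by
  rw [jList_eq, List.nodup_append]
  refine ⟨List.Nodup.map (fun a b h => by omega) List.nodup_range,
    List.Nodup.map (fun a b h => by omega) List.nodup_range, ?_⟩
  intro x hx y hy
  simp only [List.mem_map, List.mem_range] at hx hy
  obtain ⟨t, ht, rfl⟩ := hx; obtain ⟨s, hs, h⟩ := hy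
  omega

lemma jList_sorted (n : ℕ) : (jList n).Pairwise (fun a b => ordKey n a < ordKey n b) := by
  rw [jList_eq, List.pairwise_append]
  refine ⟨?_, ?_, ?_⟩
  · rw [List.pairwise_map]
    refine (List.Pairwise.and_mem.1 List.pairwise_lt_range).imp ?_
    intro a b h
    obtain ⟨ha, hb, hlt⟩ := h
    rw [List.mem_range] at ha hb
    simp only [ordKey]; split <;> split <;> omega
  · rw [List.pairwise_map]
    refine (List.Pairwise.and_mem.1 List.pairwise_lt_range).imp ?_
    intro a b h
    obtain ⟨ha, hb, hlt⟩ := h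
    rw [List.mem_range] at ha hb
    simp only [ordKey]; split <;> split <;> omega
  · intro x hx y hy
    simp only [List.mem_map, List.mem_range] at hx hy
    obtain ⟨t, ht, rfl⟩ := hx; obtain ⟨s, hs, h⟩ := hy
    subst h
    simp only [ordKey]; split <;> split <;> omega

lemma ordKey_inj {n : ℕ} {a b : ℤ} (ha : a ∈ jList n) (hb : b ∈ jList n)
    (h : ordKey n a = ordKey n b) : a = b := by
  rw [mem_jList] at ha hb
  simp only [ordKey] at h
  split at h <;> split at h <;> omega

lemma ordKey_pos' {n : ℕ} {r : ℤ} (h : 0 < r) : ordKey n r = r := if_pos h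

lemma inP_iff {n : ℕ} {r b : ℤ} : inP n (r, b) ↔
    (1 ≤ r ∧ r ≤ n ∧ ((r ≤ b ∧ b ≤ n) ∨ (r ≤ -b ∧ -b ≤ n))) := by
  show (1 ≤ r ∧ r ≤ (n : ℤ) ∧ r ≤ |b| ∧ |b| ≤ (n : ℤ)) ↔ _
  rcases abs_cases b with ⟨he, hs⟩ | ⟨he, hs⟩ <;> rw [he] <;> constructor <;>
    (rintro ⟨h1, h2, h3⟩ <;> refine ⟨h1, ?_, ?_⟩) <;> omega

lemma inP_mem_jList {n : ℕ} {r b : ℤ} (h : inP n (r, b)) : b ∈ jList n := by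
  rw [inP_iff] at h; rw [mem_jList]; omega

lemma inP_mem_jList' {n : ℕ} {p : ℤ × ℤ} (h : inP n p) : p.2 ∈ jList n := by
  obtain ⟨r, b⟩ := p; exact inP_mem_jList h

lemma inP_ordKey_lb {n : ℕ} {r b : ℤ} (h : inP n (r, b)) : r ≤ ordKey n b := by
  rw [inP_iff] at h
  simp only [ordKey]; split <;> omega

lemma posList_eq (n : ℕ) : posList n =
    ((List.range n).map fun a : ℕ => ((a : ℤ) + 1)).flatMap
      fun r => (jList n).map fun j => (r, j) := by
  simp only [posList, List.pure_def, List.bind_eq_flatMap, List.flatMap_assoc,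
    List.map_eq_flatMap, List.flatMap_map, List.flatMap_assoc, List.flatMap_singleton]

lemma mem_Pfin {n : ℕ} {p : ℤ × ℤ} : p ∈ Pfin n ↔ inP n p := by
  rw [Pfin, Finset.mem_filter, List.mem_toFinset]
  constructor
  · exact fun h => h.2
  · intro h
    refine ⟨?_, h⟩
    obtain ⟨r, b⟩ := p
    obtain ⟨h1, h2, h3⟩ := inP_iff.1 h
    rw [posList_eq]
    simp only [List.mem_flatMap, List.mem_map, List.mem_range]
    exact ⟨r, ⟨(r - 1).toNat, by omega, by omega⟩, b, mem_jList.2 (by omega), rfl⟩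

/-! row machinery -/

def rowApply (r : ℤ) (js : List ℤ) (v : ℤ) : ℤ :=
  js.foldr (fun b w => Equiv.swap r b w) v

def rowFun (r : ℤ) (js : List ℤ) (v : ℤ) : ℤ :=
  if v ∈ js then (js.takeWhile (· ≠ v)).getLastD r
  else if v = r then js.getLastD r else v

lemma getLastD_mem {l : List ℤ} (h : l ≠ []) (d : ℤ) : l.getLastD d ∈ l := by
  induction l generalizing d with
  | nil => exact absurd rfl h
  | cons b t ih =>
    rw [List.getLastD_cons]
    cases t with
    | nil => exact List.mem_cons_self
    | cons c s => exact List.mem_cons_of_mem _ (ih (by simp) b)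

lemma getLastD_irrel (c : ℤ) (s : List ℤ) (d d' : ℤ) :
    (c :: s).getLastD d = (c :: s).getLastD d' := by
  rw [List.getLastD_cons, List.getLastD_cons]

lemma rowApply_nil (r v : ℤ) : rowApply r [] v = v := rfl

lemma rowApply_cons (r b : ℤ) (js : List ℤ) (v : ℤ) :
    rowApply r (b :: js) v = Equiv.swap r b (rowApply r js v) := rfl

lemma rowApply_fixed {r : ℤ} {js : List ℤ} {v : ℤ} (hv : v ≠ r) (h : ∀ b ∈ js, v ≠ b) :
    rowApply r js v = v := by
  induction js with
  | nil => rfl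
  | cons b t ih =>
    rw [rowApply_cons, ih (fun x hx => h x (List.mem_cons_of_mem _ hx)),
      Equiv.swap_apply_of_ne_of_ne hv (h b (List.mem_cons_self))]

lemma rowApply_filter_ne (r : ℤ) (js : List ℤ) (v : ℤ) :
    rowApply r js v = rowApply r (js.filter (fun b => b ≠ r)) v := by
  induction js with
  | nil => rfl
  | cons b t ih =>
    rw [rowApply_cons, List.filter_cons]
    by_cases hb : b = r
    · subst hb
      rw [if_neg (by simp), ← ih, Equiv.swap_self, Equiv.refl_apply]
    · rw [if_pos (by simp [hb]), rowApply_cons, ih]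

lemma rowApply_eq_rowFun {r : ℤ} {js : List ℤ} (hnd : js.Nodup) (hr : r ∉ js) (v : ℤ) :
    rowApply r js v = rowFun r js v := by
  induction js with
  | nil =>
    rw [rowFun]
    simp only [List.not_mem_nil, if_false]
    split <;> rename_i h
    · rw [rowApply_nil, h, List.getLastD_nil]
    · rfl
  | cons b t ih =>
    have hbt : b ∉ t := (List.nodup_cons.1 hnd).1
    have hndt : t.Nodup := (List.nodup_cons.1 hnd).2
    have hrt : r ∉ t := fun h => hr (List.mem_cons_of_mem _ h)
    have hbr : b ≠ r := fun h => hr (h ▸ List.mem_cons_self)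
    rw [rowApply_cons, ih hndt hrt]
    by_cases hvr : v = r
    · rw [hvr, rowFun, if_neg hrt, if_pos rfl, rowFun, if_neg hr, if_pos rfl,
        List.getLastD_cons]
      cases t with
      | nil => rw [List.getLastD_nil, List.getLastD_nil, Equiv.swap_apply_left]
      | cons c s =>
        have hm : (c :: s).getLastD r ∈ c :: s := getLastD_mem (by simp) r
        rw [Equiv.swap_apply_of_ne_of_ne (fun e => hrt (by rw [← e]; exact hm))
          (fun e => hbt (by rw [← e]; exact hm)), getLastD_irrel c s r b]
    · by_cases hvb : v = b
      · subst hvb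
        rw [rowFun, if_neg hbt, if_neg hvr, Equiv.swap_apply_right, rowFun,
          if_pos (List.mem_cons_self), List.takeWhile_cons, if_neg (by simp),
          List.getLastD_nil]
      · by_cases hvt : v ∈ t
        · rw [rowFun, if_pos hvt, rowFun, if_pos (List.mem_cons_of_mem _ hvt),
            List.takeWhile_cons, if_pos (by simp [Ne.symm hvb])]
          cases htw : t.takeWhile (· ≠ v) with
          | nil =>
            rw [List.getLastD_nil, Equiv.swap_apply_left, List.getLastD_cons,
              List.getLastD_nil]
          | cons c s =>
            have hm : (c :: s).getLastD r ∈ c :: s := getLastD_mem (by simp) r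
            have hmt : (c :: s).getLastD r ∈ t :=
              (List.takeWhile_sublist _).subset (by rw [htw]; exact hm)
            rw [Equiv.swap_apply_of_ne_of_ne (fun e => hrt (by rw [← e]; exact hmt))
              (fun e => hbt (by rw [← e]; exact hmt))]
            exact (getLastD_irrel c s r b).trans List.getLastD_cons.symm
        · have hnm : v ∉ b :: t := by simp [hvb, hvt]
          rw [rowFun, if_neg hvt, if_neg hvr, rowFun, if_neg hnm, if_neg hvr,
            Equiv.swap_apply_of_ne_of_ne hvr hvb]

lemma rowFun_mem_or (r : ℤ) (js : List ℤ) (v : ℤ) :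
    rowFun r js v = v ∨ rowFun r js v = r ∨ rowFun r js v ∈ js := by
  have glem : ∀ (l : List ℤ) (d : ℤ), l.getLastD d = d ∨ l.getLastD d ∈ l := by
    intro l d
    cases l with
    | nil => left; rfl
    | cons c s => exact Or.inr (getLastD_mem (by simp) d)
  rw [rowFun]
  split
  · rcases glem (js.takeWhile (· ≠ v)) r with h | h
    · right; left; exact h
    · right; right; exact (List.takeWhile_sublist _).subset h
  · split
    · rcases glem js r with h | h
      · right; left; exact h
      · right; right; exact h
    · left; rfl

lemma getLastD_eq_of_max {n : ℕ} {js : List ℤ} {v : ℤ}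
    (hs : js.Pairwise (fun a b => ordKey n a < ordKey n b))
    (hv : v ∈ js) (hmax : ∀ b ∈ js, ordKey n b ≤ ordKey n v) (d : ℤ) :
    js.getLastD d = v := by
  induction js generalizing d with
  | nil => exact absurd hv List.not_mem_nil
  | cons c s ih =>
    rw [List.getLastD_cons]
    cases s with
    | nil => exact (show v = c by simpa using hv).symm
    | cons e u =>
      have hsp := List.pairwise_cons.1 hs
      rcases List.mem_cons.1 hv with rfl | hv'
      · exfalso
        have := hsp.1 e (List.mem_cons_self)
        have := hmax e (List.mem_cons_of_mem _ (List.mem_cons_self))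
        omega
      · exact ih hsp.2 hv' (fun b hb => hmax b (List.mem_cons_of_mem _ hb)) c

lemma rowFun_filter {n : ℕ} {K : ℤ} {js : List ℤ} {v : ℤ}
    (hs : js.Pairwise (fun a b => ordKey n a < ordKey n b))
    (hv : ordKey n v ≤ K) {r : ℤ} (hvr : v ≠ r) :
    rowFun r (js.filter (fun b => ordKey n b ≤ K)) v = rowFun r js v := by
  by_cases hmem : v ∈ js
  · have key : ∀ (l : List ℤ), l.Pairwise (fun a b => ordKey n a < ordKey n b) → v ∈ l →
        (l.filter (fun b => ordKey n b ≤ K)).takeWhile (· ≠ v) = l.takeWhile (· ≠ v) := by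
      intro l hsl hvl
      induction l with
      | nil => rfl
      | cons c s ih =>
        have hsp := List.pairwise_cons.1 hsl
        by_cases hcv : c = v
        · subst hcv
          rw [List.filter_cons, if_pos (by simpa using hv), List.takeWhile_cons,
            if_neg (by simp), List.takeWhile_cons, if_neg (by simp)]
        · have hvs : v ∈ s := (List.mem_cons.1 hvl).resolve_left (fun e => hcv e.symm)
          have hcK : ordKey n c ≤ K := le_of_lt (lt_of_lt_of_le (hsp.1 v hvs) hv)
          rw [List.filter_cons, if_pos (by simpa using hcK), List.takeWhile_cons,
            if_pos (by simpa using hcv), List.takeWhile_cons, if_pos (by simpa using hcv),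
            ih hsp.2 hvs]
    have hmemf : v ∈ js.filter (fun b => ordKey n b ≤ K) :=
      List.mem_filter.2 ⟨hmem, by simpa using hv⟩
    rw [rowFun, if_pos hmemf, rowFun, if_pos hmem, key js hs hmem]
  · have : v ∉ js.filter (fun b => ordKey n b ≤ K) :=
      fun h => hmem (List.mem_filter.1 h).1
    rw [rowFun, if_neg this, if_neg hvr, rowFun, if_neg hmem, if_neg hvr]

/-! decomposition of `wPerm` into rows -/

def rowL (n : ℕ) (M : Finset (ℤ × ℤ)) (r : ℤ) : List ℤ :=
  (jList n).filter (fun b => decide ((r, b) ∈ M))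

lemma prod_swaps_apply (l : List (ℤ × ℤ)) (x : ℤ) :
    (l.map fun p => Equiv.swap p.1 p.2).prod x =
      l.foldr (fun p v => Equiv.swap p.1 p.2 v) x := by
  induction l generalizing x with
  | nil => rfl
  | cons p t ih => rw [List.map_cons, List.prod_cons, List.foldr_cons, Equiv.Perm.mul_apply, ih]

lemma wPerm_apply (n : ℕ) (M : Finset (ℤ × ℤ)) (x : ℤ) :
    wPerm n M x = ((List.range n).map fun a : ℕ => ((a : ℤ) + 1)).foldr
      (fun r v => rowApply r (rowL n M r) v) x := by
  rw [wPerm, prod_swaps_apply, posList_eq, List.filter_flatMap]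
  generalize (List.range n).map (fun a : ℕ => ((a : ℤ) + 1)) = L
  induction L generalizing x with
  | nil => rfl
  | cons r t ih =>
    rw [List.flatMap_cons, List.foldr_append, List.foldr_cons, ih, List.filter_map,
      List.foldr_map]
    rfl

lemma mem_rowL {n : ℕ} {M : Finset (ℤ × ℤ)} {r b : ℤ} :
    b ∈ rowL n M r ↔ b ∈ jList n ∧ (r, b) ∈ M := by
  rw [rowL, List.mem_filter]
  simp

end Stmt2Aux

/-- For `J ∈ 𝒥ₖ` and `i ∈ [1,k]`, if `j` is the `⋖`-maximal element with
`(i,j) ∈ M_O(J)`, then `w^{O,J}(i) = r(i,j)`. -/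
theorem stmt2 (n k : ℕ) (O J : Finset (ℤ × ℤ)) (hA : Aset n ⊆ O) (hO : O ⊆ Pfin n)
    (hJ : IsIdeal n J) (hJk : (J ∩ Aset n).card = k)
    (i j : ℤ) (hi1 : 1 ≤ i) (hik : i ≤ (k : ℤ))
    (hmem : ((i, j) : ℤ × ℤ) ∈ MO n O J)
    (hmax : ∀ j' : ℤ, ((i, j') : ℤ × ℤ) ∈ MO n O J → ordKey n j' ≤ ordKey n j) :
    wOJ n O J i = rMap n O i j := by
  classical
  have hiN : ((i.toNat : ℤ)) = i := Int.toNat_of_nonneg (by omega)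
  -- basic memberships
  have hMsubJ : MO n O J ⊆ J := by
    intro p hp
    rcases Finset.mem_union.1 hp with h | h
    · exact (Finset.mem_inter.1 h).1
    · exact (Finset.mem_filter.1 h).1
  have hijJ : ((i, j) : ℤ × ℤ) ∈ J := hMsubJ hmem
  have hPij : inP n (i, j) := hJ.1 _ hijJ
  have hin : i ≤ (n : ℤ) := by have := inP_iff.1 hPij; omega
  have hjl : j ∈ jList n := inP_mem_jList hPij
  have hiK : i ≤ ordKey n j := inP_ordKey_lb hPij
  have hijPfin : ((i, j) : ℤ × ℤ) ∈ Pfin n := mem_Pfin.2 hPij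
  have hple_refl : ple n (i, j) (i, j) := ⟨le_refl _, le_refl _⟩
  have hijprinc : ((i, j) : ℤ × ℤ) ∈ princ n (i, j) :=
    Finset.mem_filter.2 ⟨hijPfin, hple_refl⟩
  have hprinc_mem : ∀ q ∈ princ n (i, j), q ∈ Pfin n ∧ ple n q (i, j) := by
    intro q hq
    exact ⟨(Finset.mem_filter.1 hq).1, (Finset.mem_filter.1 hq).2⟩
  have hMpsub : MO n O (princ n (i, j)) ⊆ princ n (i, j) := by
    intro p hp
    rcases Finset.mem_union.1 hp with h | h
    · exact (Finset.mem_inter.1 h).1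
    · exact (Finset.mem_filter.1 h).1
  have hMp_inP : ∀ p ∈ MO n O (princ n (i, j)), inP n p := by
    intro p hp
    exact mem_Pfin.1 (hprinc_mem p (hMpsub hp)).1
  have hM_inP : ∀ p ∈ MO n O J, inP n p := fun p hp => hJ.1 p (hMsubJ hp)
  -- (i,j) is the top of the principal ideal
  have hmaxp : ((i, j) : ℤ × ℤ) ∈ maxPrec n (princ n (i, j)) := by
    rw [maxPrec, Finset.mem_filter]
    refine ⟨hijprinc, ?_⟩
    intro q hq hpq
    obtain ⟨hqP, hqle⟩ := hprinc_mem q hq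
    have h1 : q.1 = i := le_antisymm hqle.1 hpq.1
    have h2 : q.2 = j := ordKey_inj (inP_mem_jList' (mem_Pfin.1 hqP)) hjl
      (le_antisymm hqle.2 hpq.2)
    exact Prod.ext_iff.2 ⟨h1, h2⟩
  have hijMp : ((i, j) : ℤ × ℤ) ∈ MO n O (princ n (i, j)) :=
    Finset.mem_union.2 (Or.inr hmaxp)
  -- characterization of the rows of `M_O(⟨i,j⟩)` below row i
  have hchar : ∀ r b : ℤ, 1 ≤ r → r < i →
      ((r, b) ∈ MO n O (princ n (i, j)) ↔
        ((r, b) ∈ MO n O J ∧ ordKey n b ≤ ordKey n j)) := by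
    intro r b hr1 hri
    constructor
    · intro h
      rcases Finset.mem_union.1 h with h' | h'
      · obtain ⟨hpr, hor⟩ := Finset.mem_inter.1 h'
        obtain ⟨hP, hle⟩ := hprinc_mem _ hpr
        have hJb : ((r, b) : ℤ × ℤ) ∈ J := hJ.2 (i, j) hijJ (r, b) hP hle
        exact ⟨Finset.mem_union.2 (Or.inl (Finset.mem_inter.2 ⟨hJb, hor⟩)), hle.2⟩
      · exfalso
        obtain ⟨hpr, hmx⟩ := Finset.mem_filter.1 h'
        have hle := (hprinc_mem _ hpr).2
        have := hmx (i, j) hijprinc hle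
        rw [Prod.ext_iff] at this
        have h1 : i = r := this.1
        omega
    · rintro ⟨h, hbK⟩
      have hleb : ple n (r, b) (i, j) := ⟨le_of_lt hri, hbK⟩
      rcases Finset.mem_union.1 h with h' | h'
      · obtain ⟨hJb, hor⟩ := Finset.mem_inter.1 h'
        have hP : ((r, b) : ℤ × ℤ) ∈ Pfin n := mem_Pfin.2 (hJ.1 _ hJb)
        have hpr : ((r, b) : ℤ × ℤ) ∈ princ n (i, j) := Finset.mem_filter.2 ⟨hP, hleb⟩
        exact Finset.mem_union.2 (Or.inl (Finset.mem_inter.2 ⟨hpr, hor⟩))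
      · exfalso
        obtain ⟨hJb, hmx⟩ := Finset.mem_filter.1 h'
        have := hmx (i, j) hijJ hleb
        rw [Prod.ext_iff] at this
        have h1 : i = r := this.1
        omega
  -- the action of row i
  have hrowi : ∀ Mx : Finset (ℤ × ℤ), (∀ p ∈ Mx, inP n p) → ((i, j) : ℤ × ℤ) ∈ Mx →
      (∀ b : ℤ, ((i, b) : ℤ × ℤ) ∈ Mx → ordKey n b ≤ ordKey n j) →
      rowApply i (rowL n Mx i) i = j := by
    intro Mx hsub hjm hmx
    rw [rowApply_filter_ne]
    have hnd : ((rowL n Mx i).filter (fun b => b ≠ i)).Nodup :=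
      ((List.filter_sublist).trans (List.filter_sublist)).nodup (jList_nodup n)
    have hni : i ∉ (rowL n Mx i).filter (fun b => b ≠ i) := by
      intro h
      have := List.of_mem_filter h
      simp at this
    rw [rowApply_eq_rowFun hnd hni, rowFun, if_neg hni, if_pos rfl]
    by_cases hji : j = i
    · have hemp : (rowL n Mx i).filter (fun b => b ≠ i) = [] := by
        rw [List.eq_nil_iff_forall_not_mem]
        intro b hb
        have hbr := List.mem_filter.1 hb
        obtain ⟨hbj, hbm⟩ := mem_rowL.1 hbr.1
        have hbne : b ≠ i := by simpa using hbr.2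
        have h1 : ordKey n b ≤ ordKey n j := hmx b hbm
        have h2 : i ≤ ordKey n b := inP_ordKey_lb (hsub _ hbm)
        have h3 : ordKey n j = i := by rw [hji, ordKey_pos' (by omega)]
        exact hbne (ordKey_inj hbj (hji ▸ hjl)
          (by rw [ordKey_pos' (show (0:ℤ) < i by omega)]; omega))
      rw [hemp, List.getLastD_nil, hji]
    · have hsorted : ((rowL n Mx i).filter (fun b => b ≠ i)).Pairwise
          (fun a b => ordKey n a < ordKey n b) :=
        List.Pairwise.sublist ((List.filter_sublist).trans (List.filter_sublist))
          (jList_sorted n)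
      have hjmem : j ∈ (rowL n Mx i).filter (fun b => b ≠ i) :=
        List.mem_filter.2 ⟨mem_rowL.2 ⟨hjl, hjm⟩, by simpa using hji⟩
      exact getLastD_eq_of_max hsorted hjmem
        (fun b hb => hmx b (mem_rowL.1 (List.mem_filter.1 hb).1).2) i
  -- rows above i fix i
  have hhigh : ∀ (Mx : Finset (ℤ × ℤ)), (∀ p ∈ Mx, inP n p) → ∀ (l : List ℤ),
      (∀ r ∈ l, i < r) →
      l.foldr (fun r v => rowApply r (rowL n Mx r) v) i = i := by
    intro Mx hsub l hl
    induction l with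
    | nil => rfl
    | cons r t ih =>
      rw [List.foldr_cons, ih (fun x hx => hl x (List.mem_cons_of_mem _ hx))]
      have hri : i < r := hl r (List.mem_cons_self)
      refine rowApply_fixed (by omega) ?_
      intro b hb
      have hbm := (mem_rowL.1 hb).2
      have := inP_iff.1 (hsub _ hbm)
      omega
  -- the row-by-row comparison below row i
  have hstep : ∀ r : ℤ, 1 ≤ r → r < i → ∀ v : ℤ,
      ordKey n v ≤ ordKey n j → r ≤ ordKey n v → v ≠ r →
      rowApply r (rowL n (MO n O J) r) v =
        rowApply r (rowL n (MO n O (princ n (i, j))) r) v ∧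
      ordKey n (rowApply r (rowL n (MO n O (princ n (i, j))) r) v) ≤ ordKey n j ∧
      r ≤ ordKey n (rowApply r (rowL n (MO n O (princ n (i, j))) r) v) := by
    intro r hr1 hri v hvK hrv hvr
    have hrowstep : rowL n (MO n O (princ n (i, j))) r =
        (rowL n (MO n O J) r).filter (fun b => ordKey n b ≤ ordKey n j) := by
      rw [rowL, rowL, List.filter_filter]
      refine List.filter_congr ?_
      intro b hb
      rw [Bool.eq_iff_iff]
      simp only [decide_eq_true_eq, Bool.and_eq_true]
      rw [hchar r b hr1 hri]
      exact and_comm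
    have hnd1 : ((rowL n (MO n O J) r).filter (fun b => b ≠ r)).Nodup :=
      ((List.filter_sublist).trans (List.filter_sublist)).nodup (jList_nodup n)
    have hnr1 : r ∉ (rowL n (MO n O J) r).filter (fun b => b ≠ r) := by
      intro h; have := List.of_mem_filter h; simp at this
    have hnd2 : ((rowL n (MO n O (princ n (i, j))) r).filter (fun b => b ≠ r)).Nodup :=
      ((List.filter_sublist).trans (List.filter_sublist)).nodup (jList_nodup n)
    have hnr2 : r ∉ (rowL n (MO n O (princ n (i, j))) r).filter (fun b => b ≠ r) := by
      intro h; have := List.of_mem_filter h; simp at this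
    have hsorted : ((rowL n (MO n O J) r).filter (fun b => b ≠ r)).Pairwise
        (fun a b => ordKey n a < ordKey n b) :=
      List.Pairwise.sublist ((List.filter_sublist).trans (List.filter_sublist))
        (jList_sorted n)
    have hcomm : ((rowL n (MO n O J) r).filter (fun b => b ≠ r)).filter
          (fun b => ordKey n b ≤ ordKey n j) =
        (rowL n (MO n O (princ n (i, j))) r).filter (fun b => b ≠ r) := by
      rw [hrowstep, List.filter_comm]
    have heq : rowApply r (rowL n (MO n O J) r) v =
        rowApply r (rowL n (MO n O (princ n (i, j))) r) v := by
      rw [rowApply_filter_ne, rowApply_eq_rowFun hnd1 hnr1,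
        ← rowFun_filter (n := n) (K := ordKey n j) hsorted hvK hvr, hcomm,
        ← rowApply_eq_rowFun hnd2 hnr2, ← rowApply_filter_ne]
    refine ⟨heq, ?_⟩
    rw [rowApply_filter_ne, rowApply_eq_rowFun hnd2 hnr2]
    rcases rowFun_mem_or r ((rowL n (MO n O (princ n (i, j))) r).filter (fun b => b ≠ r)) v
      with h | h | h
    · rw [h]; exact ⟨hvK, hrv⟩
    · rw [h, ordKey_pos' (by omega)]
      constructor <;> omega
    · have hmem2 := (List.mem_filter.1 h).1
      have hb := mem_rowL.1 hmem2
      exact ⟨(hprinc_mem _ (hMpsub hb.2)).2.2, inP_ordKey_lb (hMp_inP _ hb.2)⟩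
  -- rows below i, processed from row m down to row 1
  have hlow : ∀ m : ℕ, (m : ℤ) < i → ∀ v : ℤ,
      ordKey n v ≤ ordKey n j → (m : ℤ) < ordKey n v →
      ((List.range m).map fun a : ℕ => ((a : ℤ) + 1)).foldr
          (fun r w => rowApply r (rowL n (MO n O J) r) w) v =
        ((List.range m).map fun a : ℕ => ((a : ℤ) + 1)).foldr
          (fun r w => rowApply r (rowL n (MO n O (princ n (i, j))) r) w) v := by
    intro m
    induction m with
    | zero => intro _ v _ _; rfl
    | succ m ih =>
      intro hmi v hvK hmv
      rw [List.range_succ, List.map_append, List.foldr_append, List.foldr_append]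
      simp only [List.map_cons, List.map_nil, List.foldr_cons, List.foldr_nil]
      have hvr : v ≠ (m : ℤ) + 1 := by
        intro e
        rw [e, ordKey_pos' (by omega)] at hmv
        omega
      obtain ⟨heq, hwK, hwr⟩ := hstep ((m : ℤ) + 1) (by omega) (by omega) v hvK (by omega) hvr
      rw [heq]
      exact ih (by omega) _ hwK (by omega)
  -- assemble everything
  rw [wOJ, rMap, wOJ, Equiv.Perm.mul_apply, Equiv.Perm.mul_apply]
  congr 1
  rw [wPerm_apply, wPerm_apply]
  obtain ⟨T, hTeq, hTgt⟩ : ∃ T : List ℤ, ((List.range n).map fun a : ℕ => ((a : ℤ) + 1)) =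
      ((List.range (i.toNat - 1)).map fun a : ℕ => ((a : ℤ) + 1)) ++ i :: T ∧
      ∀ r ∈ T, i < r := by
    refine ⟨(List.range (n - i.toNat)).map fun a : ℕ => ((a : ℤ) + i + 1), ?_, ?_⟩
    · have hsum : (i.toNat - 1) + ((n - i.toNat) + 1) = n := by omega
      have hrange : List.range n = List.range (i.toNat - 1) ++
          (List.range ((n - i.toNat) + 1)).map (fun x => (i.toNat - 1) + x) := by
        conv_lhs => rw [← hsum]
        exact List.range_add
      rw [hrange, List.map_append]
      congr 1
      rw [List.range_succ_eq_map]
      simp only [List.map_cons, List.map_map]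
      congr 1
      · simp only [Function.comp_apply, Nat.add_zero]
        omega
      · refine List.map_congr_left ?_
        intro a ha
        simp only [Function.comp_apply]
        push_cast
        omega
    · intro r hr
      simp only [List.mem_map, List.mem_range] at hr
      obtain ⟨a, ha, rfl⟩ := hr
      omega
  rw [hTeq, List.foldr_append, List.foldr_append, List.foldr_cons, List.foldr_cons,
    hhigh _ hM_inP T hTgt, hhigh _ hMp_inP T hTgt,
    hrowi _ hM_inP hmem (fun b hb => hmax b hb),
    hrowi _ hMp_inP hijMp (fun b hb => (hprinc_mem _ (hMpsub hb)).2.2)]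
  exact hlow (i.toNat - 1) (by omega) j (le_refl _) (by omega)

end
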